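/- Let X_B be an 𝒳-resolution of an object B of 𝒜, let X be a bounded cochain complex with all terms in 𝒳, and let f : X → B be a chain map to the stalk complex B. Then for all sufficiently large m, the canonical inclusion chain map B → X_B^{≥ -m} into the brutal truncation of X_B factors, in the homotopy category, through the natural map B → Cone(f) into the mapping cone of f. -/

import Mathlib

open CategoryTheory Limits ZeroObject

universe v u

variable {A : Type u} [Category.{v} A] [Preadditive A] [HasZeroObject A]
  [HasBinaryBiproducts A]

/-- An `𝒳`-resolution of `B`. -/
structure IsXResolution (𝒳 : A → Prop) (B : A) (C : CochainComplex A ℤ) where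
  degZeroIso : C.X 0 ≅ B
  isZero_of_pos : ∀ i : ℤ, 0 < i → Limits.IsZero (C.X i)
  mem_of_neg : ∀ i : ℤ, i < 0 → 𝒳 (C.X i)
  acyclic : ∀ (T : A), 𝒳 T → ∀ n : ℤ,
    (((preadditiveCoyoneda.obj (Opposite.op T)).mapHomologicalComplex
      (ComplexShape.up ℤ)).obj C).ExactAt n

/-- The brutal (stupid) truncation `K^{≥ a}` of a cochain complex `K`:
it agrees with `K` in degrees `≥ a` and is zero elsewhere. -/
noncomputable def btrunc (K : CochainComplex A ℤ) (a : ℤ) : CochainComplex A ℤ where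
  X i := if a ≤ i then K.X i else 0
  d i j :=
    if hi : a ≤ i then
      if hj : a ≤ j then
        eqToHom (if_pos hi) ≫ K.d i j ≫ eqToHom (if_pos hj).symm
      else 0
    else 0
  shape i j h := by
    try dsimp only
    by_cases hi : a ≤ i <;> by_cases hj : a ≤ j <;> simp [hi, hj, K.shape i j h]
  d_comp_d' i j k _ _ := by
    try dsimp only
    by_cases hi : a ≤ i <;> by_cases hj : a ≤ j <;> by_cases hk : a ≤ k <;>
      simp [hi, hj, hk]

/-- The canonical inclusion `B → X_B^{≥ -m}` from the stalk complex `B` (in degree `0`)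
into the brutal truncation of an `𝒳`-resolution `X_B` of `B`, for `-m ≤ 0`:
its degree-zero component is the canonical isomorphism `B ≅ X_B^0`. -/
noncomputable def inclToBtrunc {𝒳 : A → Prop} {B : A} {XB : CochainComplex A ℤ}
    (hXB : IsXResolution 𝒳 B XB) (m : ℤ) (hm : 0 ≤ m) :
    (HomologicalComplex.single A (ComplexShape.up ℤ) 0).obj B ⟶ btrunc XB (-m) :=
  HomologicalComplex.mkHomFromSingle
    (hXB.degZeroIso.inv ≫ eqToHom (if_pos (by omega : -m ≤ (0 : ℤ))).symm)
    (fun k hk => by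
      apply Limits.IsZero.eq_of_tgt
      have hk' : k = 1 := by simpa using hk.symm
      by_cases h : -m ≤ k
      · refine Limits.IsZero.of_iso ?_ (eqToIso (if_pos h))
        refine hXB.isZero_of_pos k ?_
        omega
      · exact Limits.IsZero.of_iso (isZero_zero A) (eqToIso (if_neg h)))

theorem exists_downward_seq {α : ℤ → Type*} [∀ n, Inhabited (α n)] (a0 : α 0)
    (P : ∀ n : ℤ, α (n + 1) → α n → Prop)
    (h : ∀ n : ℤ, n ≤ -1 → ∀ x : α (n + 1), ∃ y : α n, P n x y) :
    ∃ F : ∀ n : ℤ, α n, F 0 = a0 ∧ ∀ n : ℤ, n ≤ -1 → P n (F (n + 1)) (F n) := by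
  choose s hs using h
  have hns : ∀ k : ℕ, Int.negSucc k ≤ -1 := fun k => by rw [Int.negSucc_eq]; omega
  let G : ∀ k : ℕ, α (Int.negSucc k) := fun k =>
    Nat.rec (motive := fun k => α (Int.negSucc k))
      (s (Int.negSucc 0) (hns 0) a0)
      (fun k ih => s (Int.negSucc (k + 1)) (hns _) ih) k
  refine ⟨fun n => match n with
    | Int.ofNat 0 => a0
    | Int.ofNat (k+1) => default
    | Int.negSucc k => G k, rfl, ?_⟩
  intro n hn
  match n, hn with
  | Int.negSucc 0, _ => exact hs (Int.negSucc 0) (hns 0) a0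
  | Int.negSucc (k+1), _ => exact hs (Int.negSucc (k+1)) (hns _) (G k)
  | Int.ofNat k, hn => exact absurd hn (by rw [Int.ofNat_eq_natCast]; omega)

theorem lift_of_acyclic {𝒳 : A → Prop} {B : A} {XB : CochainComplex A ℤ}
    (hXB : IsXResolution 𝒳 B XB) (T₀ : A) (hT : 𝒳 T₀) (n : ℤ)
    (u : T₀ ⟶ XB.X (n + 1)) (hu : u ≫ XB.d (n + 1) (n + 2) = 0) :
    ∃ v : T₀ ⟶ XB.X n, v ≫ XB.d n (n + 1) = u := by
  have h := hXB.acyclic T₀ hT (n + 1)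
  rw [HomologicalComplex.exactAt_iff' _ n (n + 1) (n + 2)
    (by simp only [CochainComplex.prev]; ring)
    (by simp only [CochainComplex.next]; ring)] at h
  rw [ShortComplex.ab_exact_iff] at h
  obtain ⟨v, hv⟩ := h u (by
    show ((preadditiveCoyoneda.obj (Opposite.op T₀)).map (XB.d (n + 1) (n + 2))) u = 0
    exact hu)
  exact ⟨v, hv⟩


/-- Lemma 3.2(2): given an `𝒳`-resolution `X_B` of `B`, a bounded complex `Y` with terms
in `𝒳` and a chain map `f : Y ⟶ B` to the stalk complex `B`, for all sufficiently large
`m` the canonical inclusion `B → X_B^{≥ -m}` factors, in the homotopy category, through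
the natural map `B → Cone(f)`. -/
theorem incl_factors_through_cone {𝒳 : A → Prop} {B : A} {XB : CochainComplex A ℤ}
    (hXB : IsXResolution 𝒳 B XB)
    (Y : CochainComplex A ℤ)
    (hYmem : ∀ i : ℤ, 𝒳 (Y.X i))
    (hYbdd : ∃ a b : ℤ, ∀ i : ℤ, (i < a ∨ b < i) → Limits.IsZero (Y.X i))
    (f : Y ⟶ (HomologicalComplex.single A (ComplexShape.up ℤ) 0).obj B) :
    ∃ m₀ : ℤ, 0 ≤ m₀ ∧ ∀ (m : ℤ), m₀ ≤ m → ∀ (hm : 0 ≤ m),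
      ∃ g : (HomotopyCategory.quotient A (ComplexShape.up ℤ)).obj
            (CochainComplex.mappingCone f) ⟶
          (HomotopyCategory.quotient A (ComplexShape.up ℤ)).obj (btrunc XB (-m)),
        (HomotopyCategory.quotient A (ComplexShape.up ℤ)).map
            (inclToBtrunc hXB m hm) =
          (HomotopyCategory.quotient A (ComplexShape.up ℤ)).map
            (CochainComplex.mappingCone.inr f) ≫ g := by
  obtain ⟨a, b, hab⟩ := hYbdd
  refine ⟨max 0 (1 - a), le_max_left _ _, fun m hm₀ hm => ?_⟩
  set C := CochainComplex.mappingCone f with hCdef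
  set T := btrunc XB (-m) with hTdef
  have hTX : ∀ n : ℤ, -m ≤ n → T.X n = XB.X n := fun n h => if_pos h
  have hTzero : ∀ n : ℤ, 0 < n → IsZero (T.X n) := by
    intro n hn
    by_cases h : -m ≤ n
    · exact (hXB.isZero_of_pos n hn).of_iso (eqToIso (hTX n h))
    · exact (isZero_zero A).of_iso (eqToIso (if_neg h))
  have hTd : ∀ (i j : ℤ) (hi : -m ≤ i) (hj : -m ≤ j),
      T.d i j = eqToHom (hTX i hi) ≫ XB.d i j ≫ eqToHom (hTX j hj).symm := by
    intro i j hi hj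
    show (if hi' : -m ≤ i then if hj' : -m ≤ j then
      eqToHom (if_pos hi') ≫ XB.d i j ≫ eqToHom (if_pos hj').symm else 0 else 0) = _
    rw [dif_pos hi, dif_pos hj]
    rfl
  have hSzero : ∀ n : ℤ, n ≠ 0 →
      IsZero (((HomologicalComplex.single A (ComplexShape.up ℤ) 0).obj B).X n) :=
    fun n hn => HomologicalComplex.isZero_single_obj_X _ 0 B n hn
  have hCzero : ∀ n : ℤ, n < -m → IsZero (C.X n) := by
    intro n hn
    rw [IsZero.iff_id_eq_zero, ← CochainComplex.mappingCone.id_X f n (n + 1) rfl]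
    have h1 : IsZero (Y.X (n + 1)) := hab _ (Or.inl (by omega))
    have h2 := hSzero n (by omega)
    rw [h1.eq_of_tgt ((CochainComplex.mappingCone.fst f).1.v n (n + 1) rfl) 0, zero_comp,
      h2.eq_of_tgt ((CochainComplex.mappingCone.snd f).v n n (add_zero n)) 0, zero_comp,
      add_zero]
  have key : ∀ n : ℤ, n ≤ -1 → ∀ w : C.X n ⟶ T.X (n + 1),
      w ≫ T.d (n + 1) (n + 2) = 0 → ∃ y : C.X n ⟶ T.X n, y ≫ T.d n (n + 1) = w := by
    intro n hn w hw
    by_cases hnm : -m ≤ n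
    · have hn1 : -m ≤ n + 1 := by omega
      have hn2 : -m ≤ n + 2 := by omega
      have hu : (w ≫ eqToHom (hTX (n + 1) hn1)) ≫ XB.d (n + 1) (n + 2) = 0 := by
        rw [hTd (n + 1) (n + 2) hn1 hn2] at hw
        rw [← cancel_mono (eqToHom (hTX (n + 2) hn2).symm)]
        simpa using hw
      obtain ⟨v', hv'⟩ := lift_of_acyclic hXB (Y.X (n + 1)) (hYmem (n + 1)) n
        ((CochainComplex.mappingCone.inl f).v (n + 1) n (by omega) ≫
          (w ≫ eqToHom (hTX (n + 1) hn1)))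
        (by rw [Category.assoc, hu, comp_zero])
      refine ⟨(CochainComplex.mappingCone.fst f).1.v n (n + 1) rfl ≫ v' ≫
        eqToHom (hTX n hnm).symm, ?_⟩
      have hfi : (CochainComplex.mappingCone.fst f).1.v n (n + 1) rfl ≫
          (CochainComplex.mappingCone.inl f).v (n + 1) n (by omega) = 𝟙 (C.X n) := by
        have hid := CochainComplex.mappingCone.id_X f n (n + 1) rfl
        rw [(hSzero n (by omega)).eq_of_tgt
          ((CochainComplex.mappingCone.snd f).v n n (add_zero n)) 0, zero_comp,
          add_zero] at hid
        exact hid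
      rw [hTd n (n + 1) hnm hn1]
      have hv'' := reassoc_of% hv'
      simp only [Category.assoc, eqToHom_trans_assoc, eqToHom_refl, Category.id_comp]
      rw [hv'']
      simp only [Category.assoc, eqToHom_trans, eqToHom_refl, Category.comp_id]
      rw [← Category.assoc, hfi, Category.id_comp]
    · exact ⟨0, (hCzero n (by omega)).eq_of_src _ _⟩
  -- the degree-zero map
  let g₀ : C.X 0 ⟶ T.X 0 :=
    (CochainComplex.mappingCone.snd f).v 0 0 (add_zero 0) ≫
      (HomologicalComplex.singleObjXSelf (ComplexShape.up ℤ) 0 B).hom ≫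
      hXB.degZeroIso.inv ≫ eqToHom (hTX 0 (by omega)).symm
  let α : ℤ → Type v := fun n => {x : C.X n ⟶ T.X n //
    ∃ x' : C.X (n + 1) ⟶ T.X (n + 1), x ≫ T.d n (n + 1) = C.d n (n + 1) ≫ x'}
  haveI : ∀ n, Inhabited (α n) := fun n =>
    ⟨(⟨0, ⟨0, by simp⟩⟩ : {x : C.X n ⟶ T.X n //
      ∃ x' : C.X (n + 1) ⟶ T.X (n + 1), x ≫ T.d n (n + 1) = C.d n (n + 1) ≫ x'})⟩
  have hstep : ∀ n : ℤ, n ≤ -1 → ∀ x : α (n + 1), ∃ y : α n,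
      Subtype.val y ≫ T.d n (n + 1) = C.d n (n + 1) ≫ Subtype.val x := by
    intro n hn ⟨x₁, x', hx⟩
    have hw : (C.d n (n + 1) ≫ x₁) ≫ T.d (n + 1) (n + 2) = 0 := by
      rw [show n + 2 = n + 1 + 1 by omega, Category.assoc, hx,
        HomologicalComplex.d_comp_d_assoc, zero_comp]
    obtain ⟨y₁, hy⟩ := key n hn (C.d n (n + 1) ≫ x₁) hw
    exact ⟨⟨y₁, x₁, hy⟩, hy⟩
  obtain ⟨F, hF0, hFP⟩ := exists_downward_seq (α := α)
    (⟨g₀, 0, (hTzero 1 one_pos).eq_of_tgt _ _⟩ : α 0)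
    (fun n x y => Subtype.val y ≫ T.d n (n + 1) = C.d n (n + 1) ≫ Subtype.val x) hstep
  let g' : C ⟶ T :=
    { f := fun n => Subtype.val (F n)
      comm' := by
        intro i j hij
        simp only [ComplexShape.up_Rel] at hij
        subst hij
        rcases le_or_gt i (-1) with hi | hi
        · exact hFP i hi
        · exact (hTzero (i + 1) (by omega)).eq_of_tgt _ _ }
  refine ⟨(HomotopyCategory.quotient A (ComplexShape.up ℤ)).map g', ?_⟩
  rw [← Functor.map_comp]
  congr 1
  apply HomologicalComplex.hom_ext
  intro n
  by_cases hn : n = 0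
  · subst hn
    show (inclToBtrunc hXB m hm).f 0 = (CochainComplex.mappingCone.inr f).f 0 ≫ Subtype.val (F 0)
    rw [hF0]
    show _ = (CochainComplex.mappingCone.inr f).f 0 ≫ g₀
    rw [inclToBtrunc, HomologicalComplex.mkHomFromSingle_f]
    simp only [g₀, CochainComplex.mappingCone.inr_f_snd_v_assoc]
  · exact (hSzero n hn).eq_of_src _ _
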